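/- Let Y = (Y, ν, S) be an ergodic invertible ℤ-system on a standard Borel probability space, let α be a cocycle on Y, and let π : X_α → Y be the projection onto the first coordinate of the skew product X_α = (Y × I, ν × m, T_α). Suppose there exists a Følner sequence (F_n) for ℕ such that h_slow^{L,(F_n)}(X_α | π) = 0, where L(n) = log n. Then α is a rigid cocycle, i.e. X_α is a rigid extension of Y. -/

import Mathlib

open MeasureTheory Filter Set Topology
open scoped ENNReal Classical symmDiff

section NatSlowEntropyDefs

/-- A Følner sequence for the additive semigroup `ℕ`: a sequence of nonempty finite subsets
`F n ⊆ ℕ` with `|(g + Fₙ) ∩ Fₙ| / |Fₙ| → 1` for every `g ∈ ℕ`. -/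
def IsFolnerNat (F : ℕ → Finset ℕ) : Prop :=
  (∀ n, (F n).Nonempty) ∧ ∀ g : ℕ,
    Tendsto (fun n => ((((F n).image fun h => g + h) ∩ F n).card : ℝ) / ((F n).card : ℝ))
      atTop (nhds 1)

/-- A rate function: an increasing positive function on `ℕ` tending to infinity. -/
def IsRateFunction (U : ℕ → ℝ) : Prop :=
  (∀ n, 0 < U n) ∧ Monotone U ∧ Tendsto U atTop atTop

/-- The normalized Hamming distance `d_{P,F}` (for iterates of a single map `T`). -/
noncomputable def hamDistNat {X : Type*} (T : X → X) {r : ℕ} (P : X → Fin r)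
    (F : Finset ℕ) (x x' : X) : ℝ :=
  ((F.filter fun f => P (T^[f] x) ≠ P (T^[f] x')).card : ℝ) / (F.card : ℝ)

/-- The set `E` has `d_{P,F}`-diameter at most `ε`. -/
def diamLENat {X : Type*} (T : X → X) {r : ℕ} (P : X → Fin r) (F : Finset ℕ)
    (E : Set X) (ε : ℝ) : Prop :=
  ∀ x ∈ E, ∀ x' ∈ E, hamDistNat T P F x x' ≤ ε

/-- The Hamming `ε`-covering number `cov(λ, P, F, ε)`. -/
noncomputable def hamCovNat {X : Type*} [MeasurableSpace X] (T : X → X) (lam : Measure X)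
    {r : ℕ} (P : X → Fin r) (F : Finset ℕ) (ε : ℝ) : ℕ :=
  sInf {M : ℕ | ∃ E : Fin M → Set X, (∀ i, diamLENat T P F (E i) ε) ∧
    ENNReal.ofReal (1 - ε) ≤ lam (⋃ i, E i)}

/-- The relative Hamming `ε`-covering number `cov(μ, P, F, ε | π)`, defined through the
disintegration `μy` over a factor map and the factor measure `ν`. -/
noncomputable def hamCovRelNat {X Y : Type*} [MeasurableSpace X] [MeasurableSpace Y]
    (T : X → X) (μy : Y → Measure X) (ν : Measure Y) {r : ℕ} (P : X → Fin r)
    (F : Finset ℕ) (ε : ℝ) : ℕ :=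
  sInf {M : ℕ | ∃ S : Set Y, MeasurableSet S ∧ ENNReal.ofReal (1 - ε) ≤ ν S ∧
    ∀ y ∈ S, hamCovNat T (μy y) P F ε ≤ M}

/-- Slow entropy of a partition: `sup_{ε>0} limsup_n cov(μ, P, F_n, ε)/U(|F_n|)`. -/
noncomputable def slowEntropyPartNat {X : Type*} [MeasurableSpace X] (T : X → X)
    (μ : Measure X) {r : ℕ} (P : X → Fin r) (U : ℕ → ℝ) (F : ℕ → Finset ℕ) : ℝ≥0∞ :=
  ⨆ ε ∈ Ioi (0 : ℝ),
    Filter.limsup (fun n => ENNReal.ofReal ((hamCovNat T μ P (F n) ε : ℝ) / U (F n).card))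
      atTop

/-- Slow entropy: the supremum over all finite measurable partitions. -/
noncomputable def slowEntropyNat {X : Type*} [MeasurableSpace X] (T : X → X)
    (μ : Measure X) (U : ℕ → ℝ) (F : ℕ → Finset ℕ) : ℝ≥0∞ :=
  ⨆ (r : ℕ) (P : X → Fin r) (_ : Measurable P), slowEntropyPartNat T μ P U F

/-- Relative slow entropy of a partition. -/
noncomputable def slowEntropyPartRelNat {X Y : Type*} [MeasurableSpace X] [MeasurableSpace Y]
    (T : X → X) (μy : Y → Measure X) (ν : Measure Y) {r : ℕ} (P : X → Fin r)
    (U : ℕ → ℝ) (F : ℕ → Finset ℕ) : ℝ≥0∞ :=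
  ⨆ ε ∈ Ioi (0 : ℝ),
    Filter.limsup
      (fun n => ENNReal.ofReal ((hamCovRelNat T μy ν P (F n) ε : ℝ) / U (F n).card)) atTop

/-- Relative slow entropy: the supremum over all finite measurable partitions. -/
noncomputable def slowEntropyRelNat {X Y : Type*} [MeasurableSpace X] [MeasurableSpace Y]
    (T : X → X) (μy : Y → Measure X) (ν : Measure Y)
    (U : ℕ → ℝ) (F : ℕ → Finset ℕ) : ℝ≥0∞ :=
  ⨆ (r : ℕ) (P : X → Fin r) (_ : Measurable P), slowEntropyPartRelNat T μy ν P U F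

/-- The partition distance `dist_λ(P, Q) = λ{x : P(x) ≠ Q(x)}`. -/
noncomputable def partDist {Z : Type*} [MeasurableSpace Z] (lam : Measure Z)
    {ι : Type*} (P Q : Z → ι) : ℝ≥0∞ :=
  lam {z | P z ≠ Q z}

/-- A rigid measure-preserving system: there is a sequence `0 < n₁ < n₂ < ⋯` with
`μ(T^{-n_k} A ∆ A) → 0` for every measurable `A`. -/
def IsRigidSystem {X : Type*} [MeasurableSpace X] (T : X → X) (μ : Measure X) : Prop :=
  ∃ n : ℕ → ℕ, StrictMono n ∧ 0 < n 0 ∧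
    ∀ A : Set X, MeasurableSet A →
      Tendsto (fun k => μ ((T^[n k] ⁻¹' A) ∆ A)) atTop (nhds 0)

end NatSlowEntropyDefs

section AutIDefs

/-- The group of Lebesgue-measure-preserving (bi-measurable) automorphisms of the unit
interval; we work with genuine measure-preserving measurable bijections as representatives
of their a.e.-equality classes. -/
def AutI : Type :=
  {φ : unitInterval ≃ᵐ unitInterval // MeasurePreserving φ volume volume}

/-- The skew product map `T_α(y, t) = (S y, α(y) t)` of a cocycle `α : Y → Aut(I,m)`. -/
def skewMap {Y : Type*} (S : Y → Y) (α : Y → AutI) :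
    Y × unitInterval → Y × unitInterval :=
  fun p => (S p.1, (α p.1).1 p.2)

/-- The cocycle iterates `α_n(y) = α(S^{n-1} y) ∘ ⋯ ∘ α(S y) ∘ α(y)`, so that
`T_α^n (y,t) = (S^n y, α_n(y) t)`. -/
def cocIter {Y : Type*} (S : Y → Y) (α : Y → AutI) : ℕ → Y → unitInterval → unitInterval
  | 0, _, t => t
  | n + 1, y, t => cocIter S α n (S y) ((α y).1 t)

/-- Convergence to the identity in the weak topology of `Aut(I,m)`:
`m(φₖ⁻¹ E ∆ E) → 0` for every measurable `E ⊆ I`. -/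
def TendstoIdWeak (φ : ℕ → unitInterval → unitInterval) : Prop :=
  ∀ E : Set unitInterval, MeasurableSet E →
    Tendsto (fun k => (volume : Measure unitInterval) ((φ k ⁻¹' E) ∆ E)) atTop (nhds 0)

/-- A rigid cocycle: for `ν`-a.e. `y` there is a (`y`-dependent) strictly increasing
sequence `(n_k)` with `α_{n_k}(y) → id` weakly. -/
def IsRigidCocycle {Y : Type*} [MeasurableSpace Y] (S : Y → Y) (ν : Measure Y)
    (α : Y → AutI) : Prop :=
  ∀ᵐ y ∂ν, ∃ n : ℕ → ℕ, StrictMono n ∧ TendstoIdWeak fun k => cocIter S α (n k) y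

/-- The depth-`k` dyadic partition of the unit interval, as a labeled partition. -/
noncomputable def dyadicLabel (k : ℕ) (t : unitInterval) : Fin (2 ^ k) :=
  ⟨min ⌊(t : ℝ) * 2 ^ k⌋₊ (2 ^ k - 1), by
    have h : 0 < 2 ^ k := pow_pos (by norm_num) k
    omega⟩

end AutIDefs



section AuxLemmas

open scoped unitInterval

variable {Y : Type*}

/-! ### Basic cocycle lemmas -/

lemma skewMap_iterate (S : Y → Y) (α : Y → AutI) (n : ℕ) (y : Y) (t : unitInterval) :
    (skewMap S α)^[n] (y, t) = (S^[n] y, cocIter S α n y t) := by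
  induction n generalizing y t with
  | zero => rfl
  | succ n ih =>
    rw [Function.iterate_succ_apply, Function.iterate_succ_apply]
    exact ih (S y) ((α y).1 t)

lemma cocIter_add (S : Y → Y) (α : Y → AutI) (f g : ℕ) (y : Y) (t : unitInterval) :
    cocIter S α (f + g) y t = cocIter S α g (S^[f] y) (cocIter S α f y t) := by
  induction f generalizing y t with
  | zero => simp [cocIter]
  | succ f ih =>
    have : f + 1 + g = f + g + 1 := by ring
    rw [this]
    show cocIter S α (f + g) (S y) ((α y).1 t) = _
    rw [ih (S y) ((α y).1 t)]
    rfl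

lemma cocIter_measurable (S : Y → Y) (α : Y → AutI) (n : ℕ) (y : Y) :
    Measurable (cocIter S α n y) := by
  induction n generalizing y with
  | zero => exact measurable_id
  | succ n ih => exact (ih (S y)).comp (α y).1.measurable

lemma cocIter_measurePreserving (S : Y → Y) (α : Y → AutI) (n : ℕ) (y : Y) :
    MeasurePreserving (cocIter S α n y) volume volume := by
  induction n generalizing y with
  | zero => exact MeasurePreserving.id _
  | succ n ih => exact (ih (S y)).comp (α y).2

/-! ### Dyadic label lemmas -/

lemma measurable_dyadicLabel (k : ℕ) : Measurable (dyadicLabel k) := by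
  have : dyadicLabel k = (fun m : ℕ => (⟨min m (2^k-1), by
      have h : 0 < 2 ^ k := pow_pos (by norm_num) k; omega⟩ : Fin (2^k))) ∘
      (fun t : unitInterval => ⌊(t : ℝ) * 2 ^ k⌋₊) := by
    funext t
    simp only [Function.comp_apply, dyadicLabel]
  rw [this]
  exact (measurable_from_top).comp
    (Nat.measurable_floor.comp ((measurable_subtype_coe).mul measurable_const))

lemma dyadicLabel_succ_factor (k : ℕ) :
    ∃ h : Fin (2 ^ (k + 1)) → Fin (2 ^ k), ∀ t, dyadicLabel k t = h (dyadicLabel (k + 1) t) := by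
  refine ⟨fun j => ⟨j.val / 2, ?_⟩, fun t => ?_⟩
  · have h : 0 < 2 ^ k := pow_pos (by norm_num) k
    have hj : j.val < 2 ^ (k+1) := j.isLt
    have h2 : (2:ℕ) ^ (k+1) = 2 ^ k * 2 := pow_succ 2 k
    omega
  ext
  show min ⌊(t : ℝ) * 2 ^ k⌋₊ (2 ^ k - 1) = min ⌊(t : ℝ) * 2 ^ (k+1)⌋₊ (2 ^ (k+1) - 1) / 2
  have hfloor : ⌊(t : ℝ) * 2 ^ k⌋₊ = ⌊(t : ℝ) * 2 ^ (k+1)⌋₊ / 2 := by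
    rw [← Nat.floor_div_natCast ((t : ℝ) * 2 ^ (k+1)) 2]
    congr 1
    push_cast
    ring
  have hb : ⌊(t : ℝ) * 2 ^ (k+1)⌋₊ ≤ 2 ^ (k+1) := by
    apply Nat.floor_le_of_le
    have ht := t.2.2
    have : (t:ℝ) * 2 ^ (k+1) ≤ 1 * 2 ^ (k+1) := by
      apply mul_le_mul_of_nonneg_right ht (by positivity)
    simpa using this
  have hk : 0 < 2 ^ k := pow_pos (by norm_num) k
  rw [hfloor, pow_succ] at *
  omega

lemma dyadicLabel_factor {k k' : ℕ} (h : k ≤ k') :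
    ∃ f : Fin (2 ^ k') → Fin (2 ^ k), ∀ t, dyadicLabel k t = f (dyadicLabel k' t) := by
  induction k' with
  | zero =>
    have : k = 0 := Nat.le_zero.mp h
    subst this; exact ⟨id, fun t => rfl⟩
  | succ k' ih =>
    rcases Nat.eq_or_lt_of_le h with rfl | hlt
    · exact ⟨id, fun t => rfl⟩
    · obtain ⟨f, hf⟩ := ih (Nat.lt_succ_iff.mp hlt)
      obtain ⟨g, hg⟩ := dyadicLabel_succ_factor k'
      exact ⟨f ∘ g, fun t => by rw [hf, hg]; rfl⟩

lemma dyadicLabel_mono (k : ℕ) : Monotone (dyadicLabel k) := by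
  intro s t hst
  show (min _ _ : ℕ) ≤ min _ _
  apply min_le_min _ le_rfl
  apply Nat.floor_le_floor
  exact mul_le_mul_of_nonneg_right hst (by positivity)

lemma dyadicLabel_atom_subset (k : ℕ) (j : Fin (2 ^ k)) :
    (Subtype.val '' (dyadicLabel k ⁻¹' {j})) ⊆ Icc ((j : ℝ) / 2 ^ k) (((j : ℝ) + 1) / 2 ^ k) := by
  rintro x ⟨t, ht, rfl⟩
  have hj : min ⌊(t : ℝ) * 2 ^ k⌋₊ (2 ^ k - 1) = (j : ℕ) := congrArg Fin.val ht
  have hk : (0:ℝ) < 2 ^ k := by positivity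
  have h0 : (0:ℝ) ≤ (t : ℝ) * 2 ^ k := mul_nonneg t.2.1 (by positivity)
  have hub : (t : ℝ) * 2 ^ k ≤ 2 ^ k := by
    have := mul_le_mul_of_nonneg_right t.2.2 (le_of_lt hk)
    simpa using this
  constructor
  · rw [div_le_iff₀ hk]
    rcases le_or_gt ⌊(t : ℝ) * 2 ^ k⌋₊ (2 ^ k - 1) with hle | hgt
    · rw [min_eq_left hle] at hj
      calc ((j:ℕ):ℝ) = (⌊(t : ℝ) * 2 ^ k⌋₊ : ℝ) := by rw [hj]
        _ ≤ (t : ℝ) * 2 ^ k := Nat.floor_le h0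
    · rw [min_eq_right (le_of_lt hgt)] at hj
      have h2k : (2:ℕ) ^ k ≤ ⌊(t : ℝ) * 2 ^ k⌋₊ := by omega
      have : ((2:ℕ) ^ k : ℝ) ≤ (t : ℝ) * 2 ^ k := by
        exact_mod_cast Nat.le_floor_iff h0 |>.mp h2k |>.trans le_rfl
      have hpow : (0:ℕ) < 2 ^ k := pow_pos (by norm_num) k
      calc ((j:ℕ):ℝ) = ((2 ^ k - 1 : ℕ) : ℝ) := by rw [hj]
        _ ≤ ((2:ℕ) ^ k : ℝ) := by exact_mod_cast Nat.sub_le _ _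
        _ ≤ _ := this
  · rw [le_div_iff₀ hk]
    rcases le_or_gt ⌊(t : ℝ) * 2 ^ k⌋₊ (2 ^ k - 1) with hle | hgt
    · rw [min_eq_left hle] at hj
      have hcalc : (t : ℝ) * 2 ^ k < ((j:ℕ):ℝ) + 1 := by
        calc (t : ℝ) * 2 ^ k < (⌊(t : ℝ) * 2 ^ k⌋₊ : ℝ) + 1 := Nat.lt_floor_add_one _
          _ = ((j:ℕ):ℝ) + 1 := by rw [hj]
      exact hcalc.le
    · rw [min_eq_right (le_of_lt hgt)] at hj
      have hpow : (0:ℕ) < 2 ^ k := pow_pos (by norm_num) k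
      calc (t : ℝ) * 2 ^ k ≤ 2 ^ k := hub
        _ = ((2 ^ k - 1 : ℕ) : ℝ) + 1 := by
          have : ((2 ^ k : ℕ) : ℝ) = ((2 ^ k - 1 : ℕ) : ℝ) + 1 := by
            have : (2 ^ k - 1 : ℕ) + 1 = 2 ^ k := by omega
            exact_mod_cast this.symm
          rw [← this]; norm_cast
        _ = ((j:ℕ):ℝ) + 1 := by rw [hj]

lemma volume_unitInterval_eq (A : Set unitInterval) :
    (volume : Measure unitInterval) A = volume (Subtype.val '' A) := by
  rw [unitInterval.volume_def]
  exact (MeasurableEmbedding.subtype_coe measurableSet_Icc).comap_apply _ _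

lemma volume_dyadic_atom_le (k : ℕ) (j : Fin (2 ^ k)) :
    (volume : Measure unitInterval) (dyadicLabel k ⁻¹' {j}) ≤ ENNReal.ofReal ((2 ^ k : ℝ)⁻¹) := by
  rw [volume_unitInterval_eq]
  calc volume (Subtype.val '' (dyadicLabel k ⁻¹' {j}))
      ≤ volume (Icc ((j : ℝ) / 2 ^ k) (((j : ℝ) + 1) / 2 ^ k)) :=
        measure_mono (dyadicLabel_atom_subset k j)
    _ = ENNReal.ofReal ((2 ^ k : ℝ)⁻¹) := by
        rw [Real.volume_Icc]
        congr 1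
        field_simp
        ring

/-- Approximability by dyadic sets. -/
def DyadicApprox (E : Set unitInterval) : Prop :=
  ∀ c : ℝ≥0∞, 0 < c → ∃ (k : ℕ) (J : Set (Fin (2 ^ k))),
    (volume : Measure unitInterval) (E ∆ (dyadicLabel k ⁻¹' J)) < c

lemma dyadic_refine {k k' : ℕ} (h : k ≤ k') (J : Set (Fin (2 ^ k))) :
    ∃ J' : Set (Fin (2 ^ k')), dyadicLabel k ⁻¹' J = dyadicLabel k' ⁻¹' J' := by
  obtain ⟨f, hf⟩ := dyadicLabel_factor h
  exact ⟨f ⁻¹' J, by ext t; simp [hf t]⟩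

lemma exists_small_atom (c : ℝ≥0∞) (hc : 0 < c) :
    ∃ k : ℕ, ENNReal.ofReal ((2 ^ k : ℝ)⁻¹) < c := by
  obtain ⟨n, hn⟩ := ENNReal.exists_inv_nat_lt hc.ne'
  refine ⟨n, lt_of_le_of_lt ?_ hn⟩
  rcases Nat.eq_zero_or_pos n with rfl | hpos
  · simp only [Nat.cast_zero, ENNReal.inv_zero]
    exact le_top
  have h1 : ENNReal.ofReal ((2 ^ n : ℝ)⁻¹) = (ENNReal.ofReal (2 ^ n))⁻¹ := by
    rw [ENNReal.ofReal_inv_of_pos (by positivity)]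
  rw [h1]
  apply ENNReal.inv_le_inv.mpr
  calc (n : ℝ≥0∞) ≤ ((2 ^ n : ℕ) : ℝ≥0∞) := by
        exact_mod_cast (Nat.lt_two_pow_self (n := n)).le
    _ = ENNReal.ofReal ((2:ℝ) ^ n) := by
        rw [ENNReal.ofReal_pow (by norm_num)]
        norm_num

lemma dyadicApprox_empty : DyadicApprox (∅ : Set unitInterval) := by
  intro c hc
  exact ⟨0, ∅, by simpa using hc⟩

lemma dyadicApprox_compl {E : Set unitInterval} (h : DyadicApprox E) : DyadicApprox Eᶜ := by
  intro c hc
  obtain ⟨k, J, hJ⟩ := h c hc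
  refine ⟨k, Jᶜ, ?_⟩
  have : dyadicLabel k ⁻¹' Jᶜ = (dyadicLabel k ⁻¹' J)ᶜ := rfl
  rw [this, compl_symmDiff_compl]
  exact hJ

lemma symmDiff_union_subset (A B C D : Set unitInterval) :
    (A ∪ B) ∆ (C ∪ D) ⊆ (A ∆ C) ∪ (B ∆ D) := by
  intro x hx
  simp only [Set.mem_symmDiff, Set.mem_union] at hx ⊢
  tauto

lemma dyadicApprox_union {A B : Set unitInterval} (hA : DyadicApprox A) (hB : DyadicApprox B) :
    DyadicApprox (A ∪ B) := by
  intro c hc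
  have hc2 : 0 < c / 2 := ENNReal.half_pos hc.ne'
  obtain ⟨k₁, J₁, h₁⟩ := hA (c / 2) hc2
  obtain ⟨k₂, J₂, h₂⟩ := hB (c / 2) hc2
  obtain ⟨J₁', hJ₁'⟩ := dyadic_refine (le_max_left k₁ k₂) J₁
  obtain ⟨J₂', hJ₂'⟩ := dyadic_refine (le_max_right k₁ k₂) J₂
  refine ⟨max k₁ k₂, J₁' ∪ J₂', ?_⟩
  have hpre : dyadicLabel (max k₁ k₂) ⁻¹' (J₁' ∪ J₂') =
      (dyadicLabel k₁ ⁻¹' J₁) ∪ (dyadicLabel k₂ ⁻¹' J₂) := by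
    rw [hJ₁', hJ₂']; rfl
  rw [hpre]
  calc volume ((A ∪ B) ∆ _) ≤ volume ((A ∆ (dyadicLabel k₁ ⁻¹' J₁)) ∪ (B ∆ (dyadicLabel k₂ ⁻¹' J₂))) :=
        measure_mono (symmDiff_union_subset _ _ _ _)
    _ ≤ volume (A ∆ (dyadicLabel k₁ ⁻¹' J₁)) + volume (B ∆ (dyadicLabel k₂ ⁻¹' J₂)) :=
        measure_union_le _ _
    _ < c / 2 + c / 2 := ENNReal.add_lt_add h₁ h₂
    _ = c := ENNReal.add_halves c

lemma accumulate_nat_zero (s : ℕ → Set unitInterval) : Set.accumulate s 0 = s 0 := by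
  rw [Set.accumulate_def]
  simp [Nat.le_zero]

lemma accumulate_nat_succ (s : ℕ → Set unitInterval) (n : ℕ) :
    Set.accumulate s (n + 1) = Set.accumulate s n ∪ s (n + 1) := by
  ext z
  simp only [Set.mem_accumulate, Set.mem_union]
  constructor
  · rintro ⟨y, hy, hz⟩
    rcases Nat.le_add_one_iff.mp hy with h | rfl
    · exact Or.inl ⟨y, h, hz⟩
    · exact Or.inr hz
  · rintro (⟨y, hy, hz⟩ | hz)
    · exact ⟨y, Nat.le_succ_of_le hy, hz⟩
    · exact ⟨n + 1, le_rfl, hz⟩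

lemma dyadicApprox_iUnion (s : ℕ → Set unitInterval) (hs : ∀ n, MeasurableSet (s n))
    (h : ∀ n, DyadicApprox (s n)) : DyadicApprox (⋃ i, s i) := by
  intro c hc
  have hc2 : 0 < c / 2 := ENNReal.half_pos hc.ne'
  set E := ⋃ i, s i with hE
  set U : ℕ → Set unitInterval := Set.accumulate s with hU
  have hUmono : Monotone U := Set.monotone_accumulate
  have hUE : ⋃ n, U n = E := Set.iUnion_accumulate
  have hUmeas : ∀ n, MeasurableSet (U n) := fun n =>
    MeasurableSet.biUnion (Set.to_countable _) (fun i _ => hs i)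
  have hUsub : ∀ n, U n ⊆ E := fun n => hUE ▸ Set.subset_iUnion U n
  have hEmeas : MeasurableSet E := MeasurableSet.iUnion hs
  -- find n with volume (E \ U n) < c/2
  have htend : Tendsto (fun n => volume E - volume (U n)) atTop (nhds 0) := by
    have h1 : Tendsto (fun n => volume (U n)) atTop (nhds (volume E)) := by
      have := tendsto_measure_iUnion_atTop (μ := (volume : Measure unitInterval)) hUmono
      rwa [hUE] at this
    have h2 : Continuous fun x : ℝ≥0∞ => volume E - x :=
      ENNReal.continuous_sub_left (measure_ne_top _ _)
    have := (h2.tendsto _).comp h1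
    simpa [Function.comp_def] using this
  have hev : ∀ᶠ n in atTop, volume E - volume (U n) < c / 2 :=
    htend.eventually_lt_const hc2
  obtain ⟨n, hn⟩ := hev.exists
  have hdiff : volume (E \ U n) < c / 2 := by
    rwa [measure_diff (hUsub n) (hUmeas n).nullMeasurableSet (measure_ne_top _ _)]
  -- approximate U n by dyadic
  have hUapprox : DyadicApprox (U n) := by
    clear hdiff hn hev htend hUsub hUmeas hUE hUmono
    induction n with
    | zero =>
      have : U 0 = s 0 := accumulate_nat_zero s
      rw [this]; exact h 0
    | succ n ih =>
      have : U (n + 1) = U n ∪ s (n + 1) := accumulate_nat_succ s n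
      rw [this]
      exact dyadicApprox_union ih (h (n + 1))
  obtain ⟨k, J, hk⟩ := hUapprox (c / 2) hc2
  refine ⟨k, J, ?_⟩
  calc volume (E ∆ _) ≤ volume ((E ∆ U n) ∪ (U n ∆ (dyadicLabel k ⁻¹' J))) :=
        measure_mono (symmDiff_triangle _ _ _)
    _ ≤ volume (E ∆ U n) + volume (U n ∆ (dyadicLabel k ⁻¹' J)) := measure_union_le _ _
    _ < c / 2 + c / 2 := by
        apply ENNReal.add_lt_add _ hk
        have : E ∆ U n = E \ U n := by
          rw [symmDiff_comm, symmDiff_of_le (hUsub n)]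
        rwa [this]
    _ = c := ENNReal.add_halves c

lemma dyadicApprox_Iio (a : unitInterval) : DyadicApprox (Set.Iio a) := by
  intro c hc
  obtain ⟨k, hk⟩ := exists_small_atom c hc
  refine ⟨k, {j | j < dyadicLabel k a}, ?_⟩
  have hsub : (Set.Iio a) ∆ (dyadicLabel k ⁻¹' {j | j < dyadicLabel k a}) ⊆
      dyadicLabel k ⁻¹' {dyadicLabel k a} := by
    intro t ht
    rw [Set.mem_symmDiff] at ht
    rcases ht with ⟨ht1, ht2⟩ | ⟨ht1, ht2⟩
    · -- t < a, not (L t < L a)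
      have hle : dyadicLabel k t ≤ dyadicLabel k a := dyadicLabel_mono k ht1.le
      have : ¬ dyadicLabel k t < dyadicLabel k a := fun hcon => ht2 hcon
      simp only [Set.mem_preimage, Set.mem_singleton_iff]
      exact le_antisymm hle (not_lt.mp this)
    · -- L t < L a but t ≥ a : contradiction
      exfalso
      have hge : a ≤ t := not_lt.mp ht2
      have hmon := dyadicLabel_mono k hge
      have hlt : dyadicLabel k t < dyadicLabel k a := ht1
      exact absurd hlt (not_lt.mpr hmon)
  calc volume _ ≤ volume (dyadicLabel k ⁻¹' {dyadicLabel k a}) := measure_mono hsub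
    _ ≤ ENNReal.ofReal ((2 ^ k : ℝ)⁻¹) := volume_dyadic_atom_le k _
    _ < c := hk

theorem dyadicApprox_of_measurableSet {E : Set unitInterval} (hE : MeasurableSet E) :
    DyadicApprox E := by
  have hgen : (Subtype.instMeasurableSpace : MeasurableSpace unitInterval) =
      MeasurableSpace.generateFrom (Set.range Set.Iio) := by
    rw [BorelSpace.measurable_eq (α := unitInterval), borel_eq_generateFrom_Iio]
  have hE' : MeasurableSet[MeasurableSpace.generateFrom (Set.range Set.Iio)] E := by
    rw [← hgen]; exact hE
  refine MeasurableSpace.generateFrom_induction (Set.range Set.Iio)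
    (fun s _ => DyadicApprox s) ?_ dyadicApprox_empty ?_ ?_ E hE'
  · rintro t ⟨a, rfl⟩ _
    exact dyadicApprox_Iio a
  · intro t ht hp
    exact dyadicApprox_compl hp
  · intro s hs hp
    refine dyadicApprox_iUnion s (fun n => ?_) hp
    have := hs n
    rw [← hgen] at this
    exact this

section Sep
variable {Y : Type*} [MeasurableSpace Y] (S : Y → Y) (α : Y → AutI)

/-- Set where the depth-`k` label is moved by `α_g(y)`. -/
def sepSet (k g : ℕ) (y : Y) : Set unitInterval :=
  {t | dyadicLabel k (cocIter S α g y t) ≠ dyadicLabel k t}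

noncomputable def sep (k g : ℕ) (y : Y) : ℝ≥0∞ :=
  (volume : Measure unitInterval) (sepSet S α k g y)

lemma sepSet_mono {k k' : ℕ} (h : k ≤ k') (g : ℕ) (y : Y) :
    sepSet S α k g y ⊆ sepSet S α k' g y := by
  obtain ⟨f, hf⟩ := dyadicLabel_factor h
  intro t ht
  intro hcon
  exact ht (by rw [hf, hf, hcon])

lemma sep_mono_k {k k' : ℕ} (h : k ≤ k') (g : ℕ) (y : Y) :
    sep S α k g y ≤ sep S α k' g y :=
  measure_mono (sepSet_mono S α h g y)

lemma measurableSet_sepSet_prod (hα : Measurable (skewMap S α)) (k g : ℕ) :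
    MeasurableSet {p : Y × unitInterval |
      dyadicLabel k (cocIter S α g p.1 p.2) ≠ dyadicLabel k p.2} := by
  have h1 : Measurable fun p : Y × unitInterval => dyadicLabel k (cocIter S α g p.1 p.2) := by
    have : (fun p : Y × unitInterval => cocIter S α g p.1 p.2) =
        (fun p : Y × unitInterval => ((skewMap S α)^[g] p).2) := by
      funext p
      rw [show p = (p.1, p.2) from rfl, skewMap_iterate]
    have hm : Measurable fun p : Y × unitInterval => ((skewMap S α)^[g] p).2 :=
      measurable_snd.comp (hα.iterate g)
    exact (measurable_dyadicLabel k).comp (this ▸ (by exact hm : Measurable fun p : Y × unitInterval => ((skewMap S α)^[g] p).2))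
  have h2 : Measurable fun p : Y × unitInterval => dyadicLabel k p.2 :=
    (measurable_dyadicLabel k).comp measurable_snd
  have : {p : Y × unitInterval | dyadicLabel k (cocIter S α g p.1 p.2) ≠ dyadicLabel k p.2}
      = (⋃ j : Fin (2 ^ k), ((fun p : Y × unitInterval => dyadicLabel k (cocIter S α g p.1 p.2)) ⁻¹' {j})
          ∩ ((fun p : Y × unitInterval => dyadicLabel k p.2) ⁻¹' {j}))ᶜ := by
    ext p
    simp only [Set.mem_compl_iff, Set.mem_iUnion, Set.mem_inter_iff, Set.mem_preimage,
      Set.mem_singleton_iff, Set.mem_setOf_eq]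
    constructor
    · intro hne ⟨j, hj1, hj2⟩
      exact hne (hj1.trans hj2.symm)
    · intro hno heq
      exact hno ⟨dyadicLabel k p.2, heq, rfl⟩
  rw [this]
  exact (MeasurableSet.iUnion fun j =>
    ((h1 (MeasurableSet.singleton j)).inter (h2 (MeasurableSet.singleton j)))).compl

lemma measurable_sep (hα : Measurable (skewMap S α)) (k g : ℕ) :
    Measurable fun y : Y => sep S α k g y := by
  have h := measurable_measure_prodMk_left (ν := (volume : Measure unitInterval))
    (measurableSet_sepSet_prod S α hα k g)
  have heq : (fun y : Y => sep S α k g y) = fun y : Y =>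
      (volume : Measure unitInterval)
        (Prod.mk y ⁻¹' {p : Y × unitInterval |
          dyadicLabel k (cocIter S α g p.1 p.2) ≠ dyadicLabel k p.2}) := by
    funext y
    rfl
  rw [heq]
  exact h

/-- The bad set: `α_g(y)` moves the depth-`k` dyadic partition by at least `1/(j+1)`
for every `g ≥ N`. -/
def badSet (hα : Measurable (skewMap S α)) (k j N : ℕ) : Set Y :=
  {y | ∀ g, N ≤ g → ((j : ℝ≥0∞) + 1)⁻¹ ≤ sep S α k g y}

lemma measurableSet_badSet (hα : Measurable (skewMap S α)) (k j N : ℕ) :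
    MeasurableSet (badSet S α hα k j N) := by
  have : badSet S α hα k j N = ⋂ (g : ℕ) (_ : N ≤ g),
      {y | ((j : ℝ≥0∞) + 1)⁻¹ ≤ sep S α k g y} := by
    ext y; simp [badSet]
  rw [this]
  exact MeasurableSet.iInter fun g => MeasurableSet.iInter fun _ =>
    measurableSet_le measurable_const (measurable_sep S α hα k g)

lemma symmDiff_preimage_subset_sepSet (k g : ℕ) (y : Y) (J : Set (Fin (2 ^ k))) :
    ((cocIter S α g y) ⁻¹' (dyadicLabel k ⁻¹' J)) ∆ (dyadicLabel k ⁻¹' J) ⊆ sepSet S α k g y := by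
  intro t ht
  rw [Set.mem_symmDiff] at ht
  intro hcon
  rcases ht with ⟨h1, h2⟩ | ⟨h1, h2⟩
  · refine h2 ?_
    have h1' : dyadicLabel k (cocIter S α g y t) ∈ J := h1
    show dyadicLabel k t ∈ J
    rwa [← hcon]
  · refine h2 ?_
    have h1' : dyadicLabel k t ∈ J := h1
    show dyadicLabel k (cocIter S α g y t) ∈ J
    rwa [hcon]

lemma ennreal_three_quarters {a b d c : ℝ≥0∞} (ha : a ≤ c / 4) (hb : b ≤ c / 4)
    (hd : d ≤ c / 4) : a + b + d ≤ c := by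
  calc a + b + d ≤ c / 4 + c / 4 + c / 4 := by gcongr
    _ ≤ c / 4 * 4 := by
        rw [show (4 : ℝ≥0∞) = 1 + 1 + 1 + 1 by norm_num]
        rw [mul_add, mul_add, mul_add, mul_one]
        exact le_add_right le_rfl
    _ = c := ENNReal.div_mul_cancel (by norm_num) (by norm_num)

/-- If all bad sets are null, the cocycle is rigid. -/
theorem rigid_of_badSets_null (ν : Measure Y) (hα : Measurable (skewMap S α))
    (h : ∀ k j N, ν (badSet S α hα k j N) = 0) : IsRigidCocycle S ν α := by
  have hnull : ν (⋃ (k : ℕ) (j : ℕ) (N : ℕ), badSet S α hα k j N) = 0 := by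
    refine measure_iUnion_null fun k => measure_iUnion_null fun j => measure_iUnion_null fun N => h k j N
  rw [IsRigidCocycle]
  rw [MeasureTheory.ae_iff]
  refine measure_mono_null ?_ hnull
  intro y hy
  simp only [Set.mem_setOf_eq] at hy
  by_contra hni
  apply hy
  simp only [Set.mem_iUnion, badSet, Set.mem_setOf_eq] at hni ⊢
  push_neg at hni
  -- hni : ∀ k j N, ∃ g, N ≤ g ∧ sep < (j+1)⁻¹
  have hch : ∀ k N : ℕ, ∃ g, N ≤ g ∧ sep S α k g y < ((k : ℝ≥0∞) + 1)⁻¹ := by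
    intro k N
    obtain ⟨g, hg1, hg2⟩ := hni k k N
    exact ⟨g, hg1, hg2⟩
  -- build the rigidity sequence
  let n : ℕ → ℕ := fun m => Nat.rec (Classical.choose (hch 0 0))
    (fun m prev => Classical.choose (hch (m + 1) (prev + 1))) m
  have hstep : ∀ m, n (m + 1) = Classical.choose (hch (m + 1) (n m + 1)) := fun m => rfl
  have hmono : StrictMono n := by
    apply strictMono_nat_of_lt_succ
    intro m
    rw [hstep]
    have := (Classical.choose_spec (hch (m + 1) (n m + 1))).1
    omega
  have hsep : ∀ m, sep S α m (n m) y < ((m : ℝ≥0∞) + 1)⁻¹ := by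
    intro m
    cases m with
    | zero => exact (Classical.choose_spec (hch 0 0)).2
    | succ m => rw [hstep]; exact (Classical.choose_spec (hch (m + 1) (n m + 1))).2
  refine ⟨n, hmono, ?_⟩
  intro E hE
  rw [ENNReal.tendsto_nhds_zero]
  intro c hc
  have hc4 : 0 < c / 4 := ENNReal.div_pos hc.ne' (by norm_num)
  obtain ⟨K, J, hKJ⟩ := dyadicApprox_of_measurableSet hE (c / 4) hc4
  set D := dyadicLabel K ⁻¹' J with hD
  have hDmeas : MeasurableSet D := measurable_dyadicLabel K (by trivial)
  -- find threshold for (m+1)⁻¹ ≤ c/4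
  obtain ⟨n₀, hn₀⟩ := ENNReal.exists_inv_nat_lt hc4.ne'
  rw [eventually_atTop]
  refine ⟨max K n₀, fun m hm => ?_⟩
  have hmK : K ≤ m := le_of_max_le_left hm
  have hmn₀ : n₀ ≤ m := le_of_max_le_right hm
  set φ := cocIter S α (n m) y with hφ
  have hmp : MeasurePreserving φ volume volume := cocIter_measurePreserving S α (n m) y
  have hsymm : (φ ⁻¹' E) ∆ E ⊆ ((φ ⁻¹' E) ∆ (φ ⁻¹' D)) ∪ (((φ ⁻¹' D) ∆ D) ∪ (D ∆ E)) := by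
    intro t ht
    have h1 := symmDiff_triangle (φ ⁻¹' E) (φ ⁻¹' D) E
    rcases h1 ht with h | h
    · exact Or.inl h
    · exact Or.inr (symmDiff_triangle (φ ⁻¹' D) D E h)
  calc volume ((φ ⁻¹' E) ∆ E)
      ≤ volume ((φ ⁻¹' E) ∆ (φ ⁻¹' D)) + volume ((φ ⁻¹' D) ∆ D) + volume (D ∆ E) := by
        refine le_trans (measure_mono hsymm) ?_
        refine le_trans (measure_union_le _ _) ?_
        rw [add_assoc]
        gcongr
        exact measure_union_le _ _
    _ ≤ c / 4 + c / 4 + c / 4 := by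
        gcongr
        · -- preimage of symmDiff
          rw [← Set.preimage_symmDiff]
          rw [hmp.measure_preimage (hE.symmDiff hDmeas).nullMeasurableSet]
          exact hKJ.le
        · -- sep bound
          refine le_trans (measure_mono (symmDiff_preimage_subset_sepSet S α K (n m) y J)) ?_
          refine le_trans (sep_mono_k S α hmK (n m) y) ?_
          refine le_trans (hsep m).le ?_
          refine le_trans ?_ hn₀.le
          apply ENNReal.inv_le_inv.mpr
          calc (n₀ : ℝ≥0∞) ≤ (m : ℝ≥0∞) := by exact_mod_cast hmn₀
            _ ≤ (m : ℝ≥0∞) + 1 := le_add_right le_rfl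
        · rw [symmDiff_comm]
          exact hKJ.le
    _ ≤ c := ennreal_three_quarters le_rfl le_rfl le_rfl
end Sep

/-- Thinning: any finite set of naturals contains an `N`-separated subset of
proportional size. -/
lemma exists_separated_subset (N : ℕ) (hN : 0 < N) (X : Finset ℕ) :
    ∃ G ⊆ X, (∀ a ∈ G, ∀ b ∈ G, a < b → a + N ≤ b) ∧ X.card ≤ N * G.card := by
  induction X using Finset.strongInductionOn with
  | _ X ih =>
    rcases X.eq_empty_or_nonempty with rfl | hne
    · exact ⟨∅, Finset.Subset.refl _, by simp, by simp⟩
    · set a := X.min' hne with ha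
      set X' := X.filter (fun x => a + N ≤ x) with hX'
      have hssub : X' ⊂ X := by
        refine Finset.filter_ssubset.mpr ⟨a, X.min'_mem hne, by omega⟩
      obtain ⟨G', hG'sub, hG'sep, hG'card⟩ := ih X' hssub
      refine ⟨insert a G', ?_, ?_, ?_⟩
      · intro x hx
        rcases Finset.mem_insert.mp hx with rfl | hx
        · exact X.min'_mem hne
        · exact (Finset.filter_subset _ _) (hG'sub hx)
      · intro x hx y hy hxy
        rcases Finset.mem_insert.mp hx with rfl | hx <;>
          rcases Finset.mem_insert.mp hy with rfl | hy
        · omega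
        · exact (Finset.mem_filter.mp (hG'sub hy)).2
        · -- y = a, x ∈ G' : x ≥ a + N > a = y, contradiction with x < y
          have := (Finset.mem_filter.mp (hG'sub hx)).2
          omega
        · exact hG'sep x hx y hy hxy
      · have hnotmem : a ∉ G' := by
          intro hcon
          have := (Finset.mem_filter.mp (hG'sub hcon)).2
          omega
        rw [Finset.card_insert_of_notMem hnotmem]
        have hsplit : X.card ≤ N + X'.card := by
          have h1 : X'.card + (X.filter (fun x => ¬ (a + N ≤ x))).card = X.card := by
            rw [hX']
            exact Finset.card_filter_add_card_filter_not (p := fun x => a + N ≤ x)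
          have h2 : (X.filter (fun x => ¬ (a + N ≤ x))).card ≤ N := by
            have hsub2 : X.filter (fun x => ¬ (a + N ≤ x)) ⊆ Finset.Ico a (a + N) := by
              intro x hx
              obtain ⟨hxX, hxlt⟩ := Finset.mem_filter.mp hx
              rw [Finset.mem_Ico]
              exact ⟨X.min'_le x hxX, by omega⟩
            calc (X.filter (fun x => ¬ (a + N ≤ x))).card ≤ (Finset.Ico a (a + N)).card :=
                  Finset.card_le_card hsub2
              _ = N := by rw [Nat.card_Ico]; omega
          omega
        calc X.card ≤ N + X'.card := hsplit
          _ ≤ N + N * G'.card := by omega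
          _ = N * (G'.card + 1) := by ring

/-- A Følner sequence has cardinalities tending to infinity. -/
lemma folner_card_tendsto_atTop {F : ℕ → Finset ℕ} (hF : IsFolnerNat F) :
    Tendsto (fun n => (F n).card) atTop atTop := by
  rw [tendsto_atTop]
  intro K
  rcases Nat.eq_zero_or_pos K with rfl | hK
  · exact Eventually.of_forall fun n => Nat.zero_le _
  have hlt : ((K : ℝ) - 1) / K < 1 := by
    rw [div_lt_one (by positivity)]
    linarith
  have hev := (hF.2 1).eventually (eventually_gt_nhds hlt)
  filter_upwards [hev] with n hn
  by_contra hcon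
  push_neg at hcon
  -- card < K; but ratio ≤ (card - 1)/card
  have hne := hF.1 n
  have hcpos : 0 < (F n).card := Finset.card_pos.mpr hne
  have hsub : ((F n).image fun h => 1 + h) ∩ F n ⊆ (F n).erase ((F n).min' hne) := by
    intro x hx
    obtain ⟨hx1, hx2⟩ := Finset.mem_inter.mp hx
    obtain ⟨h, hh, rfl⟩ := Finset.mem_image.mp hx1
    refine Finset.mem_erase.mpr ⟨?_, hx2⟩
    have := (F n).min'_le h hh
    omega
  have hcard : (((F n).image fun h => 1 + h) ∩ F n).card ≤ (F n).card - 1 := by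
    calc _ ≤ ((F n).erase ((F n).min' hne)).card := Finset.card_le_card hsub
      _ = (F n).card - 1 := Finset.card_erase_of_mem ((F n).min'_mem hne)
  have hratio : ((((F n).image fun h => 1 + h) ∩ F n).card : ℝ) / ((F n).card : ℝ)
      ≤ (((F n).card : ℝ) - 1) / ((F n).card : ℝ) := by
    apply div_le_div_of_nonneg_right _ (by positivity)
    · have : (((F n).card - 1 : ℕ) : ℝ) = ((F n).card : ℝ) - 1 := by
        have : 1 ≤ (F n).card := hcpos
        push_cast [Nat.cast_sub this]
        ring
      calc ((((F n).image fun h => 1 + h) ∩ F n).card : ℝ) ≤ (((F n).card - 1 : ℕ) : ℝ) := by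
            exact_mod_cast hcard
        _ = ((F n).card : ℝ) - 1 := this
  -- from hn and hratio : (K-1)/K < (c-1)/c with c < K : contradiction
  have hcK : (F n).card < K := hcon
  have h1 : ((K : ℝ) - 1) / K < (((F n).card : ℝ) - 1) / ((F n).card : ℝ) :=
    lt_of_lt_of_le hn hratio
  rw [div_lt_div_iff₀ (by positivity) (by exact_mod_cast hcpos)] at h1
  have hcR : ((F n).card : ℝ) < K := by exact_mod_cast hcK
  nlinarith [hcR, h1]

lemma counting_lemma {r : ℕ} (F G : Finset ℕ) (hGF : G ⊆ F)
    (η : ℕ → unitInterval → Fin r) (hη : ∀ f, Measurable (η f))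
    (δR : ℝ) (hδ : 0 < δR)
    (hsep : ∀ f ∈ G, ∀ f' ∈ G, f ≠ f' →
      ENNReal.ofReal δR ≤ volume {t | η f t ≠ η f' t})
    (ε : ℝ) (hε : 0 < ε) (hε1 : ε ≤ 1) (hεδ : ε < δR / 3)
    (M : ℕ) (A : Fin M → Set unitInterval) (hAmeas : ∀ i, MeasurableSet (A i))
    (hdisj : Pairwise (Function.onFun Disjoint A))
    (v : Fin M → ℕ → Fin r)
    (hrow : ∀ i, ∀ t ∈ A i, ((F.filter fun f => η f t ≠ v i f).card : ℝ) ≤ ε * F.card)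
    (hcov : ENNReal.ofReal (1 - ε) ≤ volume (⋃ i, A i)) :
    (G.card : ℝ) ≤ (r : ℝ) ^ M + 3 * ε * F.card / δR := by
  set m : Measure unitInterval := volume with hm
  set Bad : Fin M → ℕ → Set unitInterval := fun i f => A i ∩ {t | η f t ≠ v i f} with hBad
  have hBadMeas : ∀ i f, MeasurableSet (Bad i f) := fun i f =>
    (hAmeas i).inter (((hη f) (measurableSet_singleton (v i f))).compl)
  -- step 1: for each i, ∑_{f ∈ G} m (Bad i f) ≤ ofReal (ε * F.card) * m (A i)
  have hstep1 : ∀ i, ∑ f ∈ G, m (Bad i f) ≤ ENNReal.ofReal (ε * F.card) * m (A i) := by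
    intro i
    have hSf : ∀ f, MeasurableSet {t | η f t ≠ v i f} :=
      fun f => ((hη f) (measurableSet_singleton (v i f))).compl
    have hrewrite : ∀ f, m (Bad i f) = ∫⁻ t in A i,
        ({t | η f t ≠ v i f}).indicator (fun _ => (1 : ℝ≥0∞)) t ∂m := by
      intro f
      rw [lintegral_indicator (hSf f)]
      rw [Measure.restrict_restrict (hSf f)]
      rw [setLIntegral_one, Set.inter_comm]
    calc ∑ f ∈ G, m (Bad i f)
        = ∑ f ∈ G, ∫⁻ t in A i, ({t | η f t ≠ v i f}).indicator (fun _ => (1:ℝ≥0∞)) t ∂m :=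
          Finset.sum_congr rfl fun f _ => hrewrite f
      _ = ∫⁻ t in A i, ∑ f ∈ G, ({t | η f t ≠ v i f}).indicator (fun _ => (1:ℝ≥0∞)) t ∂m :=
          (lintegral_finset_sum _ (fun f _ => measurable_one.indicator (hSf f))).symm
      _ ≤ ∫⁻ _ in A i, ENNReal.ofReal (ε * F.card) ∂m := by
          apply setLIntegral_mono_ae
          · exact aemeasurable_const
          · refine Filter.Eventually.of_forall fun t ht => ?_
            have hsum : ∑ f ∈ G, ({t | η f t ≠ v i f}).indicator (fun _ => (1:ℝ≥0∞)) t
                = ((G.filter fun f => η f t ≠ v i f).card : ℝ≥0∞) := by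
              rw [Finset.card_filter]
              push_cast
              refine Finset.sum_congr rfl fun f _ => ?_
              rw [Set.indicator_apply]
              by_cases hne : η f t ≠ v i f <;> simp [hne]
            rw [hsum]
            have h1 : (G.filter fun f => η f t ≠ v i f).card
                ≤ (F.filter fun f => η f t ≠ v i f).card :=
              Finset.card_le_card (Finset.filter_subset_filter _ hGF)
            calc ((G.filter fun f => η f t ≠ v i f).card : ℝ≥0∞)
                ≤ ((F.filter fun f => η f t ≠ v i f).card : ℝ≥0∞) := by exact_mod_cast h1
              _ = ENNReal.ofReal ((F.filter fun f => η f t ≠ v i f).card : ℝ) := by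
                  rw [ENNReal.ofReal_natCast]
              _ ≤ ENNReal.ofReal (ε * F.card) := ENNReal.ofReal_le_ofReal (hrow i t ht)
      _ = ENNReal.ofReal (ε * F.card) * m (A i) := setLIntegral_const _ _
  -- step 2: total
  set BadU : ℕ → Set unitInterval := fun f => ⋃ i, Bad i f with hBadU
  have hBadUMeas : ∀ f, MeasurableSet (BadU f) := fun f => MeasurableSet.iUnion fun i => hBadMeas i f
  have hBadUvol : ∀ f, m (BadU f) = ∑ i, m (Bad i f) := by
    intro f
    have h := measure_iUnion (μ := m) (f := fun i => Bad i f)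
      (fun i j hij => (hdisj hij).mono Set.inter_subset_left Set.inter_subset_left)
      (fun i => hBadMeas i f)
    rw [tsum_fintype] at h
    exact h
  have htotal : ∑ f ∈ G, m (BadU f) ≤ ENNReal.ofReal (ε * F.card) := by
    calc ∑ f ∈ G, m (BadU f) = ∑ f ∈ G, ∑ i, m (Bad i f) :=
          Finset.sum_congr rfl fun f _ => hBadUvol f
      _ = ∑ i, ∑ f ∈ G, m (Bad i f) := Finset.sum_comm
      _ ≤ ∑ i, ENNReal.ofReal (ε * F.card) * m (A i) := Finset.sum_le_sum fun i _ => hstep1 i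
      _ = ENNReal.ofReal (ε * F.card) * ∑ i, m (A i) := by rw [Finset.mul_sum]
      _ = ENNReal.ofReal (ε * F.card) * m (⋃ i, A i) := by
          rw [measure_iUnion hdisj hAmeas]
          rw [tsum_fintype]
      _ ≤ ENNReal.ofReal (ε * F.card) * 1 := by
          gcongr
          exact prob_le_one
      _ = ENNReal.ofReal (ε * F.card) := mul_one _
  -- step 3: good f's
  set G' : Finset ℕ := G.filter (fun f => m (BadU f) ≤ ENNReal.ofReal (δR / 3)) with hG'
  set Gbad : Finset ℕ := G.filter (fun f => ¬ (m (BadU f) ≤ ENNReal.ofReal (δR / 3))) with hGbad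
  have hGsplit : G'.card + Gbad.card = G.card := Finset.card_filter_add_card_filter_not _
  -- Markov: Gbad.card * ofReal (δR/3) ≤ total
  have hGbadBound : (Gbad.card : ℝ) ≤ 3 * ε * F.card / δR := by
    have h1 : (Gbad.card : ℝ≥0∞) * ENNReal.ofReal (δR / 3) ≤ ENNReal.ofReal (ε * F.card) := by
      calc (Gbad.card : ℝ≥0∞) * ENNReal.ofReal (δR / 3)
          = Gbad.card • ENNReal.ofReal (δR / 3) := by rw [nsmul_eq_mul]
        _ ≤ ∑ f ∈ Gbad, m (BadU f) := Finset.card_nsmul_le_sum _ _ _ fun f hf =>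
            (le_of_lt (not_le.mp (Finset.mem_filter.mp hf).2))
        _ ≤ ∑ f ∈ G, m (BadU f) :=
            Finset.sum_le_sum_of_subset (Finset.filter_subset _ _)
        _ ≤ ENNReal.ofReal (ε * F.card) := htotal
    have hpos : (0:ℝ) < δR / 3 := by linarith
    have h2 : (Gbad.card : ℝ≥0∞) ≤ ENNReal.ofReal ((ε * F.card) / (δR / 3)) := by
      rw [ENNReal.ofReal_div_of_pos hpos]
      rw [ENNReal.le_div_iff_mul_le (Or.inl (by
        simp only [ne_eq, ENNReal.ofReal_eq_zero, not_le]; linarith)) (Or.inl ENNReal.ofReal_ne_top)]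
      exact h1
    have h3 : (Gbad.card : ℝ) ≤ (ε * F.card) / (δR / 3) := by
      have := ENNReal.ofReal_natCast Gbad.card
      rw [← this] at h2
      exact (ENNReal.ofReal_le_ofReal_iff (by positivity)).mp h2
    calc (Gbad.card : ℝ) ≤ (ε * F.card) / (δR / 3) := h3
      _ = 3 * ε * F.card / δR := by field_simp
  -- step 4: injectivity on G'
  have hinj : Set.InjOn (fun f => (fun i => v i f)) (G' : Set ℕ) := by
    intro f hf f' hf' heq
    by_contra hne
    have hfG : f ∈ G := (Finset.mem_filter.mp hf).1
    have hf'G : f' ∈ G := (Finset.mem_filter.mp hf').1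
    have hveq : ∀ i, v i f = v i f' := fun i => congrFun heq i
    have hcover : {t | η f t ≠ η f' t} ⊆ (⋃ i, A i)ᶜ ∪ (BadU f ∪ BadU f') := by
      intro t ht
      by_cases htA : t ∈ ⋃ i, A i
      · obtain ⟨i, hi⟩ := Set.mem_iUnion.mp htA
        right
        by_cases h1 : η f t = v i f
        · right
          refine Set.mem_iUnion.mpr ⟨i, hi, ?_⟩
          simp only [Set.mem_setOf_eq]
          rw [← hveq i, ← h1]
          exact fun hcon => ht hcon.symm
        · left
          exact Set.mem_iUnion.mpr ⟨i, hi, h1⟩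
      · exact Or.inl htA
    have hcompl : m ((⋃ i, A i)ᶜ) ≤ ENNReal.ofReal ε := by
      have hmc := measure_compl (μ := m) (MeasurableSet.iUnion hAmeas) (measure_ne_top m _)
      rw [hmc, measure_univ]
      calc 1 - m (⋃ i, A i) ≤ 1 - ENNReal.ofReal (1 - ε) := tsub_le_tsub_left hcov 1
        _ ≤ ENNReal.ofReal ε := by
            rw [tsub_le_iff_right]
            calc (1:ℝ≥0∞) = ENNReal.ofReal 1 := ENNReal.ofReal_one.symm
              _ ≤ ENNReal.ofReal (ε + (1 - ε)) := ENNReal.ofReal_le_ofReal (by linarith)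
              _ = ENNReal.ofReal ε + ENNReal.ofReal (1 - ε) :=
                  ENNReal.ofReal_add (by linarith) (by linarith)
    have hchain : ENNReal.ofReal δR ≤ ENNReal.ofReal (ε + δR / 3 + δR / 3) := by
      calc ENNReal.ofReal δR ≤ m {t | η f t ≠ η f' t} := hsep f hfG f' hf'G hne
        _ ≤ m ((⋃ i, A i)ᶜ) + (m (BadU f) + m (BadU f')) := by
            refine le_trans (measure_mono hcover) ?_
            refine le_trans (measure_union_le _ _) ?_
            gcongr
            exact measure_union_le _ _
        _ ≤ ENNReal.ofReal ε + (ENNReal.ofReal (δR / 3) + ENNReal.ofReal (δR / 3)) :=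
            add_le_add hcompl (add_le_add
              (Finset.mem_filter.mp (Finset.mem_coe.mp hf)).2
              (Finset.mem_filter.mp (Finset.mem_coe.mp hf')).2)
        _ = ENNReal.ofReal (ε + δR / 3 + δR / 3) := by
            rw [← ENNReal.ofReal_add (by linarith) (by linarith),
              ← ENNReal.ofReal_add (by linarith) (by linarith)]
            ring_nf
    have : δR ≤ ε + δR / 3 + δR / 3 :=
      (ENNReal.ofReal_le_ofReal_iff (by linarith)).mp hchain
    linarith
  have hG'card : (G'.card : ℝ) ≤ (r : ℝ) ^ M := by
    have h1 : G'.card ≤ Fintype.card (Fin M → Fin r) := by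
      have := Finset.card_le_card_of_injOn (fun f => (fun i => v i f))
        (fun f _ => Finset.mem_univ _) hinj
      simpa using this
    calc (G'.card : ℝ) ≤ (Fintype.card (Fin M → Fin r) : ℝ) := by exact_mod_cast h1
      _ = (r : ℝ) ^ M := by
          rw [Fintype.card_fun]
          push_cast
          simp
  calc (G.card : ℝ) = (G'.card : ℝ) + (Gbad.card : ℝ) := by exact_mod_cast hGsplit.symm
    _ ≤ (r : ℝ) ^ M + 3 * ε * F.card / δR := add_le_add hG'card hGbadBound

/-- First-moment visit bound: with probability at least `β/2`, the orbit visits `B`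
at least `(β/2)|F|` many times within `F`, where `β = ν B`. -/
lemma visits_lemma {Y : Type*} [MeasurableSpace Y] (ν : Measure Y) [IsProbabilityMeasure ν]
    (S : Y → Y) (hS : MeasurePreserving S ν ν) (B : Set Y) (hB : MeasurableSet B)
    (F : Finset ℕ) (hF : F.Nonempty) :
    ν B / 2 ≤ ν {y | ν B / 2 * F.card ≤ ((F.filter fun f => S^[f] y ∈ B).card : ℝ≥0∞)} := by
  classical
  set β := ν B with hβ
  set V : Y → ℝ≥0∞ := fun y => ((F.filter fun f => S^[f] y ∈ B).card : ℝ≥0∞) with hV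
  have hmeas_if : ∀ f : ℕ, Measurable fun y : Y => ((S^[f]) ⁻¹' B).indicator (fun _ => (1:ℝ≥0∞)) y :=
    fun f => measurable_one.indicator ((hS.measurable.iterate f) hB)
  have hVsum : ∀ y, V y = ∑ f ∈ F, ((S^[f]) ⁻¹' B).indicator (fun _ => (1:ℝ≥0∞)) y := by
    intro y
    rw [hV]
    simp only [Finset.card_filter]
    push_cast
    refine Finset.sum_congr rfl fun f _ => ?_
    rw [Set.indicator_apply]
    by_cases h : S^[f] y ∈ B <;> simp [h]
  have hVmeas : Measurable V := by
    have : V = fun y => ∑ f ∈ F, ((S^[f]) ⁻¹' B).indicator (fun _ => (1:ℝ≥0∞)) y := funext hVsum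
    rw [this]
    exact Finset.measurable_sum _ fun f _ => hmeas_if f
  have hVle : ∀ y, V y ≤ (F.card : ℝ≥0∞) := fun y => by
    rw [hV]
    exact_mod_cast Nat.cast_le.mpr (Finset.card_le_card (Finset.filter_subset _ _))
  have hint : ∫⁻ y, V y ∂ν = (F.card : ℝ≥0∞) * β := by
    calc ∫⁻ y, V y ∂ν = ∑ f ∈ F, ∫⁻ y, ((S^[f]) ⁻¹' B).indicator (fun _ => (1:ℝ≥0∞)) y ∂ν := by
          rw [← lintegral_finset_sum _ fun f _ => hmeas_if f]
          exact lintegral_congr fun y => hVsum y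
      _ = ∑ f ∈ F, ν ((S^[f]) ⁻¹' B) := Finset.sum_congr rfl fun f _ => by
          rw [lintegral_indicator ((hS.measurable.iterate f) hB), setLIntegral_one]
      _ = ∑ _f ∈ F, β := Finset.sum_congr rfl fun f _ => (hS.iterate f).measure_preimage
          hB.nullMeasurableSet
      _ = (F.card : ℝ≥0∞) * β := by rw [Finset.sum_const, nsmul_eq_mul]
  set G : Set Y := {y | β / 2 * F.card ≤ V y} with hG
  have hGmeas : MeasurableSet G := measurableSet_le measurable_const hVmeas
  have hsplit : ∫⁻ y, V y ∂ν ≤ (F.card : ℝ≥0∞) * ν G + β / 2 * F.card := by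
    calc ∫⁻ y, V y ∂ν = ∫⁻ y in G, V y ∂ν + ∫⁻ y in Gᶜ, V y ∂ν :=
          (lintegral_add_compl _ hGmeas).symm
      _ ≤ ∫⁻ _y in G, (F.card : ℝ≥0∞) ∂ν + ∫⁻ _y in Gᶜ, β / 2 * F.card ∂ν := by
          refine add_le_add ?_ ?_
          · exact setLIntegral_mono_ae aemeasurable_const
              (Filter.Eventually.of_forall fun y _ => hVle y)
          · refine setLIntegral_mono_ae aemeasurable_const
              (Filter.Eventually.of_forall fun y hy => ?_)
            exact le_of_lt (not_le.mp hy)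
      _ = (F.card : ℝ≥0∞) * ν G + β / 2 * F.card * ν Gᶜ := by
          rw [setLIntegral_const, setLIntegral_const]
      _ ≤ (F.card : ℝ≥0∞) * ν G + β / 2 * F.card * 1 := by gcongr; exact prob_le_one
      _ = (F.card : ℝ≥0∞) * ν G + β / 2 * F.card := by rw [mul_one]
  have hcard0 : (F.card : ℝ≥0∞) ≠ 0 := by
    simp only [ne_eq, Nat.cast_eq_zero]
    exact (Finset.card_pos.mpr hF).ne'
  have hcardtop : (F.card : ℝ≥0∞) ≠ ⊤ := ENNReal.natCast_ne_top _
  have hkey : β ≤ ν G + β / 2 := by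
    have h1 : (F.card : ℝ≥0∞) * β ≤ (F.card : ℝ≥0∞) * (ν G + β / 2) := by
      rw [mul_add]
      calc (F.card : ℝ≥0∞) * β = ∫⁻ y, V y ∂ν := hint.symm
        _ ≤ (F.card : ℝ≥0∞) * ν G + β / 2 * F.card := hsplit
        _ = (F.card : ℝ≥0∞) * ν G + (F.card : ℝ≥0∞) * (β / 2) := by ring_nf
    exact (ENNReal.mul_le_mul_iff_right hcard0 hcardtop).mp h1
  have hβtop : β ≠ ⊤ := measure_ne_top ν B
  calc β / 2 = β - β / 2 := (ENNReal.sub_half hβtop).symm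
    _ ≤ ν G := tsub_le_iff_right.mpr hkey

/-- Fiber formula for `dirac.prod volume` on measurable sets. -/
lemma dirac_prod_apply {Y : Type*} [MeasurableSpace Y] (y : Y)
    {W : Set (Y × unitInterval)} (hW : MeasurableSet W) :
    (Measure.dirac y).prod volume W = volume (Prod.mk y ⁻¹' W) := by
  rw [Measure.prod_apply hW]
  exact lintegral_dirac' y (measurable_measure_prodMk_left hW)

/-- Itinerary classes witness membership in the `hamCovNat` defining set. -/
lemma hamCovNat_card_mem {X : Type*} [MeasurableSpace X] (T : X → X) (lam : Measure X)
    [IsProbabilityMeasure lam] {r : ℕ} (P : X → Fin r) (F : Finset ℕ) (ε : ℝ) (hε : 0 < ε) :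
    Fintype.card ({x // x ∈ F} → Fin r) ∈ {M : ℕ | ∃ E : Fin M → Set X,
      (∀ i, diamLENat T P F (E i) ε) ∧
      ENNReal.ofReal (1 - ε) ≤ lam (⋃ i, E i)} := by
  classical
  refine ⟨fun i => {x | ∀ f : {x // x ∈ F}, P (T^[f.val] x) =
    (Fintype.equivFin ({x // x ∈ F} → Fin r)).symm i f}, ?_, ?_⟩
  · intro i x hx x' hx'
    have : (F.filter fun f => P (T^[f] x) ≠ P (T^[f] x')) = ∅ := by
      refine Finset.filter_eq_empty_iff.mpr fun f hf => ?_
      push_neg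
      rw [hx ⟨f, hf⟩, hx' ⟨f, hf⟩]
    rw [hamDistNat, this]
    simp only [Finset.card_empty, Nat.cast_zero, zero_div]
    exact hε.le
  · have huniv : (⋃ i, {x | ∀ f : {x // x ∈ F}, P (T^[f.val] x) =
        (Fintype.equivFin ({x // x ∈ F} → Fin r)).symm i f}) = Set.univ := by
      refine Set.eq_univ_of_forall fun x => ?_
      refine Set.mem_iUnion.mpr ⟨Fintype.equivFin ({x // x ∈ F} → Fin r)
        (fun f => P (T^[f.val] x)), fun f => ?_⟩
      rw [Equiv.symm_apply_apply]
    rw [huniv, measure_univ]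
    exact ENNReal.ofReal_le_one.mpr (by linarith)




/-! ### Fiber covering lower bound -/

lemma measurableSet_ne_fin {X : Type*} [MeasurableSpace X] {r : ℕ} {a b : X → Fin r}
    (ha : Measurable a) (hb : Measurable b) : MeasurableSet {x | a x ≠ b x} := by
  have : {x | a x ≠ b x} = (⋃ j : Fin r, a ⁻¹' {j} ∩ b ⁻¹' {j})ᶜ := by
    ext x
    simp only [Set.mem_compl_iff, Set.mem_iUnion, Set.mem_inter_iff, Set.mem_preimage,
      Set.mem_singleton_iff, Set.mem_setOf_eq]
    constructor
    · intro hne ⟨j, hj1, hj2⟩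
      exact hne (hj1.trans hj2.symm)
    · intro hno heq
      exact hno ⟨b x, heq, rfl⟩
  rw [this]
  exact (MeasurableSet.iUnion fun j =>
    (ha (measurableSet_singleton j)).inter (hb (measurableSet_singleton j))).compl

lemma measurableSet_sepSet' {Y : Type*} (S : Y → Y) (α : Y → AutI) (k g : ℕ) (z : Y) :
    MeasurableSet (sepSet S α k g z) :=
  measurableSet_ne_fin ((measurable_dyadicLabel k).comp (cocIter_measurable S α g z))
    (measurable_dyadicLabel k)

lemma exists_disjointed_fin {X : Type*} [MeasurableSpace X] {M : ℕ} (C : Fin M → Set X)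
    (hC : ∀ i, MeasurableSet (C i)) :
    ∃ A : Fin M → Set X, (∀ i, A i ⊆ C i) ∧ (∀ i, MeasurableSet (A i)) ∧
      Pairwise (Function.onFun Disjoint A) ∧ (⋃ i, A i) = ⋃ i, C i := by
  classical
  refine ⟨fun i => C i \ ⋃ (j : Fin M) (_ : j < i), C j, fun i => Set.diff_subset, fun i =>
    (hC i).diff (MeasurableSet.iUnion fun j => MeasurableSet.iUnion fun _ => hC j), ?_, ?_⟩
  · have key : ∀ i i' : Fin M, i < i' →
        Disjoint (C i \ ⋃ (j : Fin M) (_ : j < i), C j)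
          (C i' \ ⋃ (j : Fin M) (_ : j < i'), C j) := by
      intro i i' hlt
      rw [Set.disjoint_left]
      intro x hx hx'
      exact hx'.2 (Set.mem_iUnion.mpr ⟨i, Set.mem_iUnion.mpr ⟨hlt, hx.1⟩⟩)
    intro i i' hne
    rcases lt_or_gt_of_ne hne with h | h
    · exact key _ _ h
    · exact (key _ _ h).symm
  · apply Set.Subset.antisymm
    · exact Set.iUnion_mono fun i => Set.diff_subset
    · intro x hx
      obtain ⟨i, hi⟩ := Set.mem_iUnion.mp hx
      set s := Finset.univ.filter (fun j : Fin M => x ∈ C j) with hs_def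
      have hs : s.Nonempty := ⟨i, by simp [hs_def, hi]⟩
      refine Set.mem_iUnion.mpr ⟨s.min' hs, ⟨(Finset.mem_filter.mp (s.min'_mem hs)).2, ?_⟩⟩
      intro hcon
      obtain ⟨j, hj⟩ := Set.mem_iUnion.mp hcon
      obtain ⟨hjlt, hjC⟩ := Set.mem_iUnion.mp hj
      have : s.min' hs ≤ j := s.min'_le j (by simp [hs_def, hjC])
      exact absurd hjlt (not_lt.mpr this)

lemma fiber_lower_bound {Y : Type*} [MeasurableSpace Y] [MeasurableSingletonClass Y]
    (S : Y → Y) (α : Y → AutI) (hα : Measurable (skewMap S α))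
    (k j N : ℕ) (hN : 0 < N) (δR : ℝ) (hδR : 0 < δR)
    (hδ : ENNReal.ofReal δR ≤ ((j : ℝ≥0∞) + 1)⁻¹)
    (Fn : Finset ℕ) (hFne : Fn.Nonempty)
    (ε : ℝ) (hε : 0 < ε) (hε1 : ε ≤ 1) (hεδ : ε < δR / 3)
    (y : Y) (M : ℕ)
    (hM : ∃ E : Fin M → Set (Y × unitInterval),
      (∀ i, diamLENat (skewMap S α) (fun x => dyadicLabel k x.2) Fn (E i) ε) ∧
      ENNReal.ofReal (1 - ε) ≤ ((Measure.dirac y).prod volume) (⋃ i, E i)) :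
    ((Fn.filter fun f => S^[f] y ∈ badSet S α hα k j N).card : ℝ)
      ≤ N * ((((2:ℕ) ^ k : ℕ) : ℝ) ^ M + 3 * ε * Fn.card / δR) := by
  classical
  obtain ⟨E, hdiam, hcovE⟩ := hM
  set η : ℕ → unitInterval → Fin (2 ^ k) := fun f t => dyadicLabel k (cocIter S α f y t) with hη
  have hηmeas : ∀ f, Measurable (η f) := fun f =>
    (measurable_dyadicLabel k).comp (cocIter_measurable S α f y)
  have hrpos : 0 < 2 ^ k := pow_pos two_pos k
  set v : Fin M → ℕ → Fin (2 ^ k) := fun i f =>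
    if h : ∃ t, (y, t) ∈ E i then η f (Classical.choose h) else ⟨0, hrpos⟩ with hv
  set C : Fin M → Set unitInterval := fun i =>
    {t | ((Fn.filter fun f => η f t ≠ v i f).card : ℝ) ≤ ε * Fn.card} with hC
  have hFcard : (0:ℝ) < Fn.card := by exact_mod_cast Finset.card_pos.mpr hFne
  have hCmeas : ∀ i, MeasurableSet (C i) := by
    intro i
    have hcnt : Measurable fun t => ((Fn.filter fun f => η f t ≠ v i f).card : ℕ) := by
      have hrw : (fun t => (Fn.filter fun f => η f t ≠ v i f).card) =
          fun t => ∑ f ∈ Fn, if η f t ≠ v i f then 1 else 0 := by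
        funext t; rw [Finset.card_filter]
      rw [hrw]
      exact Finset.measurable_sum _ fun f _ => Measurable.ite
        (measurableSet_ne_fin (hηmeas f) measurable_const) measurable_const measurable_const
    have : C i = (fun t => ((Fn.filter fun f => η f t ≠ v i f).card : ℕ)) ⁻¹'
        {n : ℕ | (n : ℝ) ≤ ε * Fn.card} := rfl
    rw [this]
    exact hcnt MeasurableSet.of_discrete
  have hfiber : ∀ i t, (y, t) ∈ E i → t ∈ C i := by
    intro i t hti
    have hex : ∃ t, (y, t) ∈ E i := ⟨t, hti⟩
    have hrep := Classical.choose_spec hex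
    have hdist := hdiam i _ hti _ hrep
    rw [hamDistNat, div_le_iff₀ hFcard] at hdist
    show ((Fn.filter fun f => η f t ≠ v i f).card : ℝ) ≤ ε * Fn.card
    have hfilter : (Fn.filter fun f => η f t ≠ v i f) =
        (Fn.filter fun f => (fun x => dyadicLabel k x.2) ((skewMap S α)^[f] (y, t)) ≠
          (fun x => dyadicLabel k x.2) ((skewMap S α)^[f] (y, Classical.choose hex))) := by
      refine Finset.filter_congr fun f _ => ?_
      rw [skewMap_iterate, skewMap_iterate]
      simp only [hv, dif_pos hex, hη]
    rw [hfilter]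
    exact hdist
  have hcovC : ENNReal.ofReal (1 - ε) ≤ (volume : Measure unitInterval) (⋃ i, C i) := by
    set W1 : Set (Y × unitInterval) := ({y} ×ˢ (Set.univ : Set unitInterval))ᶜ with hW1
    set W2 : Set (Y × unitInterval) := Set.univ ×ˢ ⋃ i, C i with hW2
    have hW1meas : MeasurableSet W1 := ((measurableSet_singleton y).prod MeasurableSet.univ).compl
    have hW2meas : MeasurableSet W2 := MeasurableSet.univ.prod (MeasurableSet.iUnion hCmeas)
    have hsub : (⋃ i, E i) ⊆ W1 ∪ W2 := by
      rintro ⟨y', t'⟩ hx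
      obtain ⟨i, hi⟩ := Set.mem_iUnion.mp hx
      by_cases hy' : y' = y
      · subst hy'
        right
        exact ⟨trivial, Set.mem_iUnion.mpr ⟨i, hfiber i t' hi⟩⟩
      · left
        simp only [hW1, Set.mem_compl_iff, Set.mem_prod, Set.mem_singleton_iff]
        tauto
    have h1 : ((Measure.dirac y).prod volume) W1 = 0 := by
      rw [dirac_prod_apply y hW1meas]
      have : Prod.mk y ⁻¹' W1 = ∅ := by
        ext t
        simp [hW1]
      rw [this, measure_empty]
    have h2 : ((Measure.dirac y).prod volume) W2 = volume (⋃ i, C i) := by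
      rw [dirac_prod_apply y hW2meas]
      congr 1
      ext t
      simp [hW2]
    calc ENNReal.ofReal (1 - ε) ≤ ((Measure.dirac y).prod volume) (⋃ i, E i) := hcovE
      _ ≤ ((Measure.dirac y).prod volume) (W1 ∪ W2) := measure_mono hsub
      _ ≤ ((Measure.dirac y).prod volume) W1 + ((Measure.dirac y).prod volume) W2 :=
          measure_union_le _ _
      _ = volume (⋃ i, C i) := by rw [h1, h2, zero_add]
  obtain ⟨A, hAsub, hAmeas, hAdisj, hAUnion⟩ := exists_disjointed_fin C hCmeas
  set V := Fn.filter fun f => S^[f] y ∈ badSet S α hα k j N with hVdef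
  obtain ⟨G, hGV, hGsep, hGcard⟩ := exists_separated_subset N hN V
  have hGF : G ⊆ Fn := hGV.trans (Finset.filter_subset _ _)
  have hsep : ∀ f ∈ G, ∀ f' ∈ G, f ≠ f' →
      ENNReal.ofReal δR ≤ volume {t | η f t ≠ η f' t} := by
    have key : ∀ f ∈ G, ∀ f' ∈ G, f < f' →
        ENNReal.ofReal δR ≤ volume {t | η f t ≠ η f' t} := by
      intro f hf f' hf' hlt
      have hgap : f + N ≤ f' := hGsep f hf f' hf' hlt
      have hfB : S^[f] y ∈ badSet S α hα k j N := (Finset.mem_filter.mp (hGV hf)).2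
      obtain ⟨g, hgN, hf'eq⟩ : ∃ g, N ≤ g ∧ f' = f + g := ⟨f' - f, by omega, by omega⟩
      subst hf'eq
      have hseteq : {t | η f t ≠ η (f + g) t} =
          (cocIter S α f y) ⁻¹' (sepSet S α k g (S^[f] y)) := by
        ext t
        simp only [Set.mem_setOf_eq, Set.mem_preimage, sepSet, hη]
        rw [cocIter_add S α f g y t]
        exact ⟨fun h => fun hc => h hc.symm, fun h => fun hc => h hc.symm⟩
      rw [hseteq, (cocIter_measurePreserving S α f y).measure_preimage
        (measurableSet_sepSet' S α k g _).nullMeasurableSet]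
      exact le_trans hδ (hfB g hgN)
    intro f hf f' hf' hne
    rcases lt_or_gt_of_ne hne with h | h
    · exact key f hf f' hf' h
    · have h1 := key f' hf' f hf h
      have hswap : {t | η f t ≠ η f' t} = {t | η f' t ≠ η f t} := by
        ext t; exact ne_comm
      rw [hswap]; exact h1
  have hrow : ∀ i, ∀ t ∈ A i, ((Fn.filter fun f => η f t ≠ v i f).card : ℝ) ≤ ε * Fn.card :=
    fun i t ht => hAsub i ht
  have hcovA : ENNReal.ofReal (1 - ε) ≤ volume (⋃ i, A i) := by rw [hAUnion]; exact hcovC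
  have hmain := counting_lemma Fn G hGF η hηmeas δR hδR hsep ε hε hε1 hεδ M A hAmeas hAdisj
    v hrow hcovA
  calc (V.card : ℝ) ≤ (N : ℝ) * G.card := by exact_mod_cast hGcard
    _ ≤ N * ((((2:ℕ) ^ k : ℕ) : ℝ) ^ M + 3 * ε * Fn.card / δR) := by
        apply mul_le_mul_of_nonneg_left hmain (by positivity)

lemma hamCovNat_set_nonempty {X : Type*} [MeasurableSpace X] (T : X → X) (lam : Measure X)
    [IsProbabilityMeasure lam] {r : ℕ} (P : X → Fin r) (F : Finset ℕ) (ε : ℝ) (hε : 0 < ε) :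
    {M : ℕ | ∃ E : Fin M → Set X, (∀ i, diamLENat T P F (E i) ε) ∧
      ENNReal.ofReal (1 - ε) ≤ lam (⋃ i, E i)}.Nonempty :=
  ⟨_, hamCovNat_card_mem T lam P F ε hε⟩

lemma prob_compl_le_ofReal {X : Type*} [MeasurableSpace X] (μ : Measure X)
    [IsProbabilityMeasure μ] {A : Set X} (hA : MeasurableSet A) {ε : ℝ} (hε0 : 0 ≤ ε)
    (hε1 : ε ≤ 1) (h : ENNReal.ofReal (1 - ε) ≤ μ A) : μ Aᶜ ≤ ENNReal.ofReal ε := by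
  rw [measure_compl hA (measure_ne_top μ A), measure_univ]
  calc 1 - μ A ≤ 1 - ENNReal.ofReal (1 - ε) := tsub_le_tsub_left h 1
    _ ≤ ENNReal.ofReal ε := by
        rw [tsub_le_iff_right]
        calc (1:ℝ≥0∞) = ENNReal.ofReal 1 := ENNReal.ofReal_one.symm
          _ ≤ ENNReal.ofReal (ε + (1 - ε)) := ENNReal.ofReal_le_ofReal (by linarith)
          _ = ENNReal.ofReal ε + ENNReal.ofReal (1 - ε) :=
              ENNReal.ofReal_add hε0 (by linarith)

end AuxLemmas

set_option maxHeartbeats 1000000 in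
/-- Theorem `RelativeRigidtySufficientCondition`.
Let `(Y, ν, S)` be ergodic, `α` a cocycle on `Y`, and `π : X_α → Y` the first-coordinate
projection of the skew product.  If there is a Følner sequence `(F_n)` for `ℕ` with
`h_slow^{L,(F_n)}(X_α | π) = 0` for `L(n) = log n`, then `α` is a rigid cocycle, i.e.
`X_α` is a rigid extension of `Y`. -/
theorem zero_log_relative_slow_entropy_implies_rigid_extension
    {Y : Type*} [MeasurableSpace Y] [StandardBorelSpace Y]
    (ν : Measure Y) [IsProbabilityMeasure ν]
    (S : Y ≃ᵐ Y) (hS : MeasurePreserving S ν ν) (hErg : Ergodic (⇑S) ν)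
    (α : Y → AutI) (hα : Measurable (skewMap (⇑S) α))
    (F : ℕ → Finset ℕ) (hF : IsFolnerNat F)
    (h0 : slowEntropyRelNat (skewMap (⇑S) α) (fun y => (Measure.dirac y).prod volume) ν
        (fun n => Real.log n) F = 0) :
    IsRigidCocycle (⇑S) ν α := by
  classical
  by_contra hnr
  -- extract bad parameters from non-rigidity
  have hex : ∃ k j N, ν (badSet (⇑S) α hα k j N) ≠ 0 := by
    by_contra hall
    push_neg at hall
    exact hnr (rigid_of_badSets_null (⇑S) α ν hα hall)
  obtain ⟨k₀, j, N₀, hBne⟩ := hex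
  set k := k₀ + 1 with hkdef
  set N := N₀ + 1 with hNdef
  have hkpos : 0 < k := Nat.succ_pos _
  have hNpos : 0 < N := Nat.succ_pos _
  have hBmono : badSet (⇑S) α hα k₀ j N₀ ⊆ badSet (⇑S) α hα k j N := by
    intro y hy g hg
    exact le_trans (hy g (by omega)) (sep_mono_k (⇑S) α (Nat.le_succ k₀) g y)
  have hBmeas : MeasurableSet (badSet (⇑S) α hα k j N) := measurableSet_badSet (⇑S) α hα k j N
  have hβ0 : ν (badSet (⇑S) α hα k j N) ≠ 0 := by
    intro hcon
    exact hBne (measure_mono_null hBmono hcon)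
  have hβtop : ν (badSet (⇑S) α hα k j N) ≠ ⊤ := measure_ne_top ν _
  set βR := (ν (badSet (⇑S) α hα k j N)).toReal with hβRdef
  have hβRpos : 0 < βR := ENNReal.toReal_pos hβ0 hβtop
  have hβR1 : βR ≤ 1 := by
    rw [hβRdef]
    have h1 : ν (badSet (⇑S) α hα k j N) ≤ 1 := prob_le_one
    calc (ν (badSet (⇑S) α hα k j N)).toReal ≤ (1 : ℝ≥0∞).toReal :=
          ENNReal.toReal_mono ENNReal.one_ne_top h1
      _ = 1 := ENNReal.toReal_one
  set δR : ℝ := ((j:ℝ)+1)⁻¹ with hδRdef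
  have hδRpos : 0 < δR := by rw [hδRdef]; positivity
  have hδR1 : δR ≤ 1 := by
    rw [hδRdef]
    have hj0 : (0:ℝ) ≤ (j:ℝ) := Nat.cast_nonneg j
    exact inv_le_one_of_one_le₀ (by linarith)
  have hδconv : ENNReal.ofReal δR ≤ ((j : ℝ≥0∞) + 1)⁻¹ := by
    have h1 : ((j : ℝ≥0∞) + 1) = ENNReal.ofReal ((j:ℝ) + 1) := by
      rw [ENNReal.ofReal_add (Nat.cast_nonneg j) zero_le_one, ENNReal.ofReal_natCast,
        ENNReal.ofReal_one]
    rw [h1, ← ENNReal.ofReal_inv_of_pos (by positivity)]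
  have hNR : (1:ℝ) ≤ (N:ℝ) := by exact_mod_cast hNpos
  set ε : ℝ := βR * δR / (12 * (N:ℝ)) with hεdef
  have hεpos : 0 < ε := by
    rw [hεdef]
    exact div_pos (mul_pos hβRpos hδRpos) (by linarith)
  have hε1 : ε ≤ 1 := by
    rw [hεdef]
    rw [div_le_one (by linarith)]
    nlinarith
  have hεδ : ε < δR / 3 := by
    rw [hεdef]
    rw [div_lt_div_iff₀ (by linarith) (by norm_num)]
    nlinarith
  have hεβhalf : ε < βR / 2 := by
    rw [hεdef]
    rw [div_lt_div_iff₀ (by linarith) (by norm_num)]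
    nlinarith
  -- extract the limsup condition from h0
  have h0' : slowEntropyPartRelNat (skewMap (⇑S) α) (fun y => (Measure.dirac y).prod volume) ν
      (fun x : Y × unitInterval => dyadicLabel k x.2) (fun n => Real.log n) F = 0 := by
    have h1 : (⨆ (r : ℕ) (P : Y × unitInterval → Fin r) (_ : Measurable P),
        slowEntropyPartRelNat (skewMap (⇑S) α) (fun y => (Measure.dirac y).prod volume) ν P
          (fun n => Real.log n) F) = 0 := h0
    rw [ENNReal.iSup_eq_zero] at h1
    have h2 := h1 (2^k)
    rw [ENNReal.iSup_eq_zero] at h2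
    have h3 := h2 (fun x : Y × unitInterval => dyadicLabel k x.2)
    rw [ENNReal.iSup_eq_zero] at h3
    exact h3 ((measurable_dyadicLabel k).comp measurable_snd)
  have hlim : Filter.limsup (fun n => ENNReal.ofReal
      ((hamCovRelNat (skewMap (⇑S) α) (fun y => (Measure.dirac y).prod volume) ν
        (fun x : Y × unitInterval => dyadicLabel k x.2) (F n) ε : ℝ) /
        Real.log ((F n).card : ℝ))) atTop = 0 := by
    have h1 : (⨆ ε' ∈ Set.Ioi (0:ℝ), Filter.limsup (fun n => ENNReal.ofReal
        ((hamCovRelNat (skewMap (⇑S) α) (fun y => (Measure.dirac y).prod volume) ν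
          (fun x : Y × unitInterval => dyadicLabel k x.2) (F n) ε' : ℝ) /
          Real.log ((F n).card : ℝ))) atTop) = 0 := h0'
    rw [ENNReal.iSup_eq_zero] at h1
    have h2 := h1 ε
    rw [ENNReal.iSup_eq_zero] at h2
    exact h2 (Set.mem_Ioi.mpr hεpos)
  -- threshold quantities
  have hlog2 : 0 < Real.log 2 := Real.log_pos one_lt_two
  have hkR : (1:ℝ) ≤ (k:ℝ) := by exact_mod_cast hkpos
  set c : ℝ := 1 / (4 * (k:ℝ) * Real.log 2) with hcdef
  have hcpos : 0 < c := by
    rw [hcdef]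
    apply one_div_pos.mpr
    nlinarith
  have hev1 : ∀ᶠ n in atTop, ENNReal.ofReal
      ((hamCovRelNat (skewMap (⇑S) α) (fun y => (Measure.dirac y).prod volume) ν
        (fun x : Y × unitInterval => dyadicLabel k x.2) (F n) ε : ℝ) /
        Real.log ((F n).card : ℝ)) < ENNReal.ofReal c := by
    refine Filter.eventually_lt_of_limsup_lt ?_ (by isBoundedDefault)
    rw [hlim]
    exact ENNReal.ofReal_pos.mpr hcpos
  set c₀ : ℝ := βR / (4 * (N:ℝ)) with hc₀def
  have hc₀pos : 0 < c₀ := by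
    rw [hc₀def]
    exact div_pos hβRpos (by linarith)
  have hlogtend : Tendsto (fun n => Real.log ((F n).card : ℝ)) atTop atTop :=
    Real.tendsto_log_atTop.comp (tendsto_natCast_atTop_atTop.comp (folner_card_tendsto_atTop hF))
  have hev2 : ∀ᶠ n in atTop, max 1 (-2 * Real.log c₀) ≤ Real.log ((F n).card : ℝ) :=
    hlogtend.eventually_ge_atTop _
  obtain ⟨n, hn1, hn2⟩ := (hev1.and hev2).exists
  have hFnne : (F n).Nonempty := hF.1 n
  have hFncard : (0:ℝ) < (F n).card := by exact_mod_cast Finset.card_pos.mpr hFnne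
  set L := Real.log (((F n).card : ℕ) : ℝ) with hLdef
  have hL1 : 1 ≤ L := le_trans (le_max_left _ _) hn2
  have hLc₀ : -2 * Real.log c₀ ≤ L := le_trans (le_max_right _ _) hn2
  set M' := hamCovRelNat (skewMap (⇑S) α) (fun y => (Measure.dirac y).prod volume) ν
    (fun x : Y × unitInterval => dyadicLabel k x.2) (F n) ε with hM'def
  have hM'lt : (M' : ℝ) / L < c := (ENNReal.ofReal_lt_ofReal_iff hcpos).mp hn1
  -- the relative covering set is nonempty, so M' is a member
  have hrelne : {M : ℕ | ∃ Sset : Set Y, MeasurableSet Sset ∧ ENNReal.ofReal (1 - ε) ≤ ν Sset ∧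
      ∀ y ∈ Sset, hamCovNat (skewMap (⇑S) α) ((Measure.dirac y).prod volume)
        (fun x : Y × unitInterval => dyadicLabel k x.2) (F n) ε ≤ M}.Nonempty := by
    refine ⟨Fintype.card ({x // x ∈ F n} → Fin (2^k)), Set.univ, MeasurableSet.univ, ?_, ?_⟩
    · rw [measure_univ]
      exact ENNReal.ofReal_le_one.mpr (by linarith)
    · intro y _
      exact Nat.sInf_le (hamCovNat_card_mem (skewMap (⇑S) α) ((Measure.dirac y).prod volume)
        (fun x : Y × unitInterval => dyadicLabel k x.2) (F n) ε hεpos)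
  have hM'mem : ∃ Sset : Set Y, MeasurableSet Sset ∧ ENNReal.ofReal (1 - ε) ≤ ν Sset ∧
      ∀ y ∈ Sset, hamCovNat (skewMap (⇑S) α) ((Measure.dirac y).prod volume)
        (fun x : Y × unitInterval => dyadicLabel k x.2) (F n) ε ≤ M' := Nat.sInf_mem hrelne
  obtain ⟨Sset, hSmeas, hSν, hSbound⟩ := hM'mem
  -- the good set of y's with many visits
  have hGood := visits_lemma ν (⇑S) hS (badSet (⇑S) α hα k j N) hBmeas (F n) hFnne
  have hcap : (Sset ∩ {y | ν (badSet (⇑S) α hα k j N) / 2 * (F n).card ≤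
      (((F n).filter fun f => (⇑S)^[f] y ∈ badSet (⇑S) α hα k j N).card : ℝ≥0∞)}).Nonempty := by
    rw [Set.nonempty_iff_ne_empty]
    intro hemp
    have h5 : ν (badSet (⇑S) α hα k j N) / 2 ≤ ENNReal.ofReal ε := by
      calc ν (badSet (⇑S) α hα k j N) / 2
          ≤ ν {y | ν (badSet (⇑S) α hα k j N) / 2 * (F n).card ≤
            (((F n).filter fun f => (⇑S)^[f] y ∈ badSet (⇑S) α hα k j N).card : ℝ≥0∞)} := hGood
        _ ≤ ν ({y | ν (badSet (⇑S) α hα k j N) / 2 * (F n).card ≤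
            (((F n).filter fun f => (⇑S)^[f] y ∈ badSet (⇑S) α hα k j N).card : ℝ≥0∞)} ∩ Sset)
            + ν ({y | ν (badSet (⇑S) α hα k j N) / 2 * (F n).card ≤
            (((F n).filter fun f => (⇑S)^[f] y ∈ badSet (⇑S) α hα k j N).card : ℝ≥0∞)} \ Sset) :=
            measure_le_inter_add_diff _ _ _
        _ ≤ 0 + ν Ssetᶜ := by
            gcongr
            · rw [Set.inter_comm] at hemp
              rw [hemp, measure_empty]
            · first
              | exact Set.diff_subset_compl _ _
              | exact measure_mono (Set.diff_subset_compl _ _)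
        _ = ν Ssetᶜ := zero_add _
        _ ≤ ENNReal.ofReal ε := prob_compl_le_ofReal ν hSmeas hεpos.le hε1 hSν
    have h6 : ENNReal.ofReal ε < ν (badSet (⇑S) α hα k j N) / 2 := by
      have h7 : ν (badSet (⇑S) α hα k j N) / 2 = ENNReal.ofReal (βR / 2) := by
        rw [ENNReal.ofReal_div_of_pos (by norm_num), hβRdef, ENNReal.ofReal_toReal hβtop]
        norm_num
      rw [h7]
      exact (ENNReal.ofReal_lt_ofReal_iff (by linarith)).mpr hεβhalf
    exact absurd h5 (not_le.mpr h6)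
  obtain ⟨y, hySset, hyGd⟩ := hcap
  -- real-valued visit bound
  have hvis : (βR / 2) * (F n).card ≤
      (((F n).filter fun f => (⇑S)^[f] y ∈ badSet (⇑S) α hα k j N).card : ℝ) := by
    have h6 : ν (badSet (⇑S) α hα k j N) / 2 * (F n).card ≤
        (((F n).filter fun f => (⇑S)^[f] y ∈ badSet (⇑S) α hα k j N).card : ℝ≥0∞) := hyGd
    have h7 := ENNReal.toReal_mono (ENNReal.natCast_ne_top _) h6
    rw [ENNReal.toReal_mul, ENNReal.toReal_div] at h7
    simpa using h7
  -- fiber covering lower bound at y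
  have hM'amem : ∃ E : Fin (hamCovNat (skewMap (⇑S) α) ((Measure.dirac y).prod volume)
      (fun x : Y × unitInterval => dyadicLabel k x.2) (F n) ε) → Set (Y × unitInterval),
      (∀ i, diamLENat (skewMap (⇑S) α) (fun x : Y × unitInterval => dyadicLabel k x.2) (F n)
        (E i) ε) ∧
      ENNReal.ofReal (1 - ε) ≤ ((Measure.dirac y).prod volume) (⋃ i, E i) :=
    Nat.sInf_mem (hamCovNat_set_nonempty (skewMap (⇑S) α) ((Measure.dirac y).prod volume)
      (fun x : Y × unitInterval => dyadicLabel k x.2) (F n) ε hεpos)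
  have hflb := fiber_lower_bound (⇑S) α hα k j N hNpos δR hδRpos hδconv (F n) hFnne
    ε hεpos hε1 hεδ y _ hM'amem
  -- combine
  have hεval : 3 * ε * ((F n).card:ℝ) / δR = βR * (F n).card / (4 * (N:ℝ)) := by
    rw [hεdef]
    field_simp
    ring
  set R : ℝ := (((2:ℕ) ^ k : ℕ) : ℝ) with hRdef
  have hR1 : (1:ℝ) ≤ R := by
    rw [hRdef]
    exact_mod_cast Nat.one_le_two_pow
  set Ma := hamCovNat (skewMap (⇑S) α) ((Measure.dirac y).prod volume)
    (fun x : Y × unitInterval => dyadicLabel k x.2) (F n) ε with hMadef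
  have h11 : (βR/2) * (F n).card ≤ (N:ℝ) * R^Ma + βR * (F n).card/4 := by
    calc (βR/2) * ((F n).card:ℝ)
        ≤ (((F n).filter fun f => (⇑S)^[f] y ∈ badSet (⇑S) α hα k j N).card : ℝ) := hvis
      _ ≤ (N:ℝ) * (R ^ Ma + 3 * ε * (F n).card / δR) := hflb
      _ = (N:ℝ) * R^Ma + βR * (F n).card/4 := by
          rw [mul_add, hεval]
          have hNne : (N:ℝ) ≠ 0 := by linarith
          field_simp
  have hpow : c₀ * (F n).card ≤ R ^ Ma := by
    have h12 : βR * (F n).card ≤ 4 * (N:ℝ) * R^Ma := by linarith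
    rw [hc₀def, div_mul_eq_mul_div, div_le_iff₀ (by linarith : (0:ℝ) < 4 * (N:ℝ))]
    calc βR * ((F n).card:ℝ) ≤ 4 * (N:ℝ) * R^Ma := h12
      _ = R^Ma * (4*(N:ℝ)) := by ring
  have hMaM' : Ma ≤ M' := hSbound y hySset
  have hpow2 : c₀ * (F n).card ≤ R ^ M' :=
    le_trans hpow (pow_le_pow_right₀ hR1 hMaM')
  -- take logarithms
  have hlogs : Real.log c₀ + L ≤ (M' : ℝ) * ((k:ℝ) * Real.log 2) := by
    have h8 : Real.log (c₀ * (F n).card) ≤ Real.log (R ^ M') :=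
      Real.log_le_log (mul_pos hc₀pos hFncard) hpow2
    rw [Real.log_mul hc₀pos.ne' (by positivity), Real.log_pow] at h8
    have hRlog : Real.log R = (k:ℝ) * Real.log 2 := by
      rw [hRdef]
      have : (((2:ℕ) ^ k : ℕ) : ℝ) = (2:ℝ)^k := by push_cast; ring
      rw [this, Real.log_pow]
    rw [hRlog] at h8
    exact h8
  have h9 : L / 2 ≤ Real.log c₀ + L := by linarith
  have h10 : (M':ℝ) < c * L := by
    have hLpos : (0:ℝ) < L := by linarith
    exact (div_lt_iff₀ hLpos).mp hM'lt
  have hklog : (0:ℝ) < (k:ℝ) * Real.log 2 := by nlinarith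
  have hfin : L / 2 < L / 4 := by
    calc L/2 ≤ Real.log c₀ + L := h9
      _ ≤ (M':ℝ) * ((k:ℝ) * Real.log 2) := hlogs
      _ < (c*L) * ((k:ℝ) * Real.log 2) := by
          exact mul_lt_mul_of_pos_right h10 hklog
      _ = L / 4 := by
          rw [hcdef]
          field_simp
  linarith
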